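/- If S and T are Hermitian operators on a finite-dimensional complex Hilbert space with S ≤ T in the Löwner order, then tr(exp S) ≤ tr(exp T). -/

import Mathlib

open Matrix Filter
open scoped ComplexOrder

/-- Functional calculus for Hermitian matrices: apply `f` to the eigenvalues. -/
noncomputable def mfun {d : ℕ} (f : ℝ → ℝ) (A : Matrix (Fin d) (Fin d) ℂ) :
    Matrix (Fin d) (Fin d) ℂ :=
  if hA : A.IsHermitian then
    (hA.eigenvectorUnitary : Matrix (Fin d) (Fin d) ℂ) *
      Matrix.diagonal (fun i => (f (hA.eigenvalues i) : ℂ)) *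
      star (hA.eigenvectorUnitary : Matrix (Fin d) (Fin d) ℂ)
  else 0

noncomputable def mexp {d : ℕ} (A : Matrix (Fin d) (Fin d) ℂ) : Matrix (Fin d) (Fin d) ℂ :=
  mfun Real.exp A

noncomputable def mlog {d : ℕ} (A : Matrix (Fin d) (Fin d) ℂ) : Matrix (Fin d) (Fin d) ℂ :=
  mfun Real.log A

/-- The Löwner order: `A ≤ B` iff `B - A` is positive semidefinite. -/
def loewnerLE {d : ℕ} (A B : Matrix (Fin d) (Fin d) ℂ) : Prop :=
  (B - A).PosSemidef

/-- The quadratic form ⟨Ax, x⟩. -/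
noncomputable def qf {d : ℕ} (A : Matrix (Fin d) (Fin d) ℂ) (x : Fin d → ℂ) : ℂ :=
  star x ⬝ᵥ A.mulVec x

/-- The rank-one projection x ⊗ x. -/
noncomputable def rankOneProj {d : ℕ} (x : Fin d → ℂ) : Matrix (Fin d) (Fin d) ℂ :=
  Matrix.vecMulVec x (star x)


open NormedSpace
open scoped Nat

attribute [local instance] Matrix.linftyOpNormedAddCommGroup Matrix.linftyOpNormedRing Matrix.linftyOpSeminormedAddCommGroup
  Matrix.linftyOpNormedAlgebra

lemma mexp_eq_exp {d : ℕ} (A : Matrix (Fin d) (Fin d) ℂ) (hA : A.IsHermitian) :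
    mexp A = exp A := by
  set U : Matrix (Fin d) (Fin d) ℂ := (hA.eigenvectorUnitary : Matrix (Fin d) (Fin d) ℂ)
  have hU : U * star U = 1 := (Matrix.mem_unitaryGroup_iff).mp hA.eigenvectorUnitary.2
  have hUinv : U⁻¹ = star U := Matrix.inv_eq_right_inv hU
  have hU' : star U * U = 1 := (Matrix.mem_unitaryGroup_iff').mp hA.eigenvectorUnitary.2
  have hUunit : IsUnit U := ⟨⟨U, star U, hU, hU'⟩, rfl⟩
  rw [mexp, mfun, dif_pos hA]
  conv_rhs => rw [hA.spectral_theorem, Unitary.conjStarAlgAut_apply]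
  rw [← hUinv, Matrix.exp_conj U _ hUunit, Matrix.exp_diagonal]
  congr 2
  rw [Pi.exp_def]
  funext i
  simp [Function.comp, ← Complex.exp_eq_exp_ℂ, ← Complex.ofReal_exp]

lemma mexp_posSemidef {d : ℕ} (A : Matrix (Fin d) (Fin d) ℂ) (hA : A.IsHermitian) :
    (mexp A).PosSemidef := by
  rw [mexp, mfun, dif_pos hA]
  have hdiag : (Matrix.diagonal (fun i => ((Real.exp (hA.eigenvalues i) : ℝ) : ℂ))).PosSemidef :=
    Matrix.posSemidef_diagonal_iff.mpr fun i => Complex.zero_le_real.mpr (Real.exp_nonneg _)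
  have h2 := hdiag.mul_mul_conjTranspose_same
    (hA.eigenvectorUnitary : Matrix (Fin d) (Fin d) ℂ)
  simpa [Matrix.star_eq_conjTranspose] using h2

lemma exp_posSemidef {d : ℕ} (A : Matrix (Fin d) (Fin d) ℂ) (hA : A.IsHermitian) :
    (exp A).PosSemidef := mexp_eq_exp A hA ▸ mexp_posSemidef A hA

lemma psd_diag_re_nonneg {d : ℕ} {P : Matrix (Fin d) (Fin d) ℂ} (hP : P.PosSemidef) (i : Fin d) :
    0 ≤ (P i i).re := by
  have h := hP.diag_nonneg (i := i)
  simpa using (Complex.le_def.mp h).1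

lemma psd_trace_re_nonneg {d : ℕ} {P : Matrix (Fin d) (Fin d) ℂ} (hP : P.PosSemidef) :
    0 ≤ P.trace.re := by
  rw [Matrix.trace, Complex.re_sum]
  exact Finset.sum_nonneg fun i _ => psd_diag_re_nonneg hP i

open scoped MatrixOrder in
lemma psd_trace_mul_re_nonneg {d : ℕ} {P Q : Matrix (Fin d) (Fin d) ℂ}
    (hP : P.PosSemidef) (hQ : Q.PosSemidef) : 0 ≤ ((P * Q).trace).re := by
  set R := CFC.sqrt P
  have hR : R.PosSemidef := (CFC.sqrt_nonneg P).posSemidef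
  have hPR : P = R * R := by
    have := CFC.sq_sqrt P hP.nonneg
    rw [pow_two] at this; exact this.symm
  have hcyc : (P * Q).trace = (R * Q * R).trace := by
    rw [hPR, mul_assoc, Matrix.trace_mul_comm R (R * Q)]
  rw [hcyc]
  have : (R * Q * R).PosSemidef := by
    have := hQ.mul_mul_conjTranspose_same R
    rwa [hR.1] at this
  exact psd_trace_re_nonneg this

lemma herm_line {d : ℕ} {S Δ : Matrix (Fin d) (Fin d) ℂ} (hS : S.IsHermitian)
    (hΔ : Δ.IsHermitian) (t : ℝ) : (S + (t : ℂ) • Δ).IsHermitian := by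
  rw [Matrix.IsHermitian, Matrix.conjTranspose_add, Matrix.conjTranspose_smul,
    Complex.star_def, Complex.conj_ofReal, hS.eq, hΔ.eq]

noncomputable def trCLM : Matrix (Fin d) (Fin d) ℂ →L[ℂ] ℂ :=
  LinearMap.toContinuousLinearMap (Matrix.traceLinearMap (Fin d) ℂ ℂ)

@[simp] lemma trCLM_apply (X : Matrix (Fin d) (Fin d) ℂ) : trCLM X = X.trace := rfl

-- derivative of powers
lemma hasDerivAt_mpow {M : ℝ → Matrix (Fin d) (Fin d) ℂ} {Δ : Matrix (Fin d) (Fin d) ℂ}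
    (hM : ∀ t, HasDerivAt M Δ t) (n : ℕ) (t : ℝ) :
    HasDerivAt (fun s => (M s) ^ n)
      (∑ k ∈ Finset.range n, (M t) ^ k * Δ * (M t) ^ (n - 1 - k)) t := by
  induction n with
  | zero => simp only [pow_zero, Finset.range_zero, Finset.sum_empty]; exact hasDerivAt_const t _
  | succ n ih =>
      have h := (hM t).mul ih
      have : (fun s => M s * M s ^ n) = fun s => (M s) ^ (n+1) := by
        funext s; rw [← pow_succ']
      rw [← this]
      refine h.congr_deriv ?_
      symm
      rw [Finset.sum_range_succ', add_comm]
      congr 1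
      · simp
      · rw [Finset.mul_sum]
        apply Finset.sum_congr rfl
        intro k hk
        rw [Finset.mem_range] at hk
        have he : n + 1 - 1 - (k + 1) = n - 1 - k := by omega
        rw [he, pow_succ']
        noncomm_ring

lemma trace_deriv_sum (A Δ : Matrix (Fin d) (Fin d) ℂ) (n : ℕ) :
    (∑ k ∈ Finset.range n, A ^ k * Δ * A ^ (n - 1 - k)).trace
      = (n : ℂ) * (A ^ (n - 1) * Δ).trace := by
  rw [Matrix.trace_sum]
  rw [Finset.sum_congr rfl (g := fun _ => (A ^ (n-1) * Δ).trace) ?_]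
  · rw [Finset.sum_const, Finset.card_range, nsmul_eq_mul]
  · intro k hk
    rw [Finset.mem_range] at hk
    have he : n - 1 - k + k = n - 1 := by omega
    rw [Matrix.trace_mul_comm, ← mul_assoc, ← pow_add, he]

noncomputable def LDelta (Δ : Matrix (Fin d) (Fin d) ℂ) : Matrix (Fin d) (Fin d) ℂ →L[ℂ] ℂ :=
  LinearMap.toContinuousLinearMap
    ((Matrix.traceLinearMap (Fin d) ℂ ℂ).comp (LinearMap.mulRight ℂ Δ))

@[simp] lemma LDelta_apply (Δ X : Matrix (Fin d) (Fin d) ℂ) : LDelta Δ X = (X * Δ).trace := rfl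

set_option maxHeartbeats 1000000 in
lemma hasDerivAt_trace_exp (S Δ : Matrix (Fin d) (Fin d) ℂ) {y : ℝ}
    (hy : y ∈ Set.Ioo (-2 : ℝ) 2) :
    HasDerivAt (fun t : ℝ => (exp (S + (t : ℂ) • Δ)).trace)
      ((exp (S + (y : ℂ) • Δ) * Δ).trace) y := by
  set M : ℝ → Matrix (Fin d) (Fin d) ℂ := fun t => S + (t : ℂ) • Δ with hM
  have hMd : ∀ t : ℝ, HasDerivAt M Δ t := by
    intro t
    have h1 : HasDerivAt (fun t : ℝ => (t : ℂ)) 1 t := Complex.ofRealCLM.hasDerivAt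
    have h2 := h1.smul_const Δ
    rw [one_smul] at h2
    have h3 := (hasDerivAt_const t S).add h2
    rw [zero_add] at h3
    exact h3
  set g : ℕ → ℝ → ℂ := fun n t => ((n ! : ℂ)⁻¹) • ((M t) ^ n).trace with hgdef
  set g' : ℕ → ℝ → ℂ := fun n t => (((n ! : ℂ)⁻¹) * n) • ((M t) ^ (n - 1) * Δ).trace with hg'def
  have hg : ∀ n t, HasDerivAt (g n) (g' n t) t := by
    intro n t
    have h0 : HasDerivAt (fun s => ((M s) ^ n).trace)
        ((n : ℂ) * ((M t) ^ (n - 1) * Δ).trace) t := by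
      have h := ((trCLM.restrictScalars ℝ).hasFDerivAt).comp_hasDerivAt t (hasDerivAt_mpow hMd n t)
      have h' : HasDerivAt (fun s => ((M s) ^ n).trace) (trCLM (∑ k ∈ Finset.range n, (M t) ^ k * Δ * (M t) ^ (n - 1 - k))) t := h
      rwa [trCLM_apply, trace_deriv_sum] at h'
    have h1 := h0.const_smul ((n ! : ℂ)⁻¹)
    refine h1.congr_deriv ?_
    simp [hg'def, smul_smul, mul_assoc]
  set T' : @ContinuousLinearMap ℂ ℂ _ _ (RingHom.id ℂ) (Matrix (Fin d) (Fin d) ℂ)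
    PseudoMetricSpace.toUniformSpace.toTopologicalSpace _ ℂ _ _ _ _ := trCLM with hT'
  set C := ‖T'‖ with hC
  set R := ‖S‖ + 2 * ‖Δ‖ + 1 with hRdef
  have hR1 : (1 : ℝ) ≤ R := by
    rw [hRdef]; nlinarith [norm_nonneg S, norm_nonneg Δ]
  have hR0 : (0 : ℝ) ≤ R := le_trans zero_le_one hR1
  have hMle : ∀ t ∈ Set.Ioo (-2 : ℝ) 2, ‖M t‖ ≤ R := by
    intro t ht
    calc ‖M t‖ ≤ ‖S‖ + ‖(t : ℂ) • Δ‖ := norm_add_le _ _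
      _ = ‖S‖ + |t| * ‖Δ‖ := by rw [norm_smul, Complex.norm_real, Real.norm_eq_abs]
      _ ≤ ‖S‖ + 2 * ‖Δ‖ := by
          have : |t| ≤ 2 := by rw [abs_le]; exact ⟨ht.1.le, ht.2.le⟩
          nlinarith [norm_nonneg Δ]
      _ ≤ R := by simp [hRdef]
  have hpowmul : ∀ (A : Matrix (Fin d) (Fin d) ℂ), ‖A‖ ≤ R → ∀ m : ℕ,
      ‖A ^ m * Δ‖ ≤ R ^ m * ‖Δ‖ := by
    intro A hA m
    induction m with
    | zero => simp
    | succ m ih =>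
        calc ‖A ^ (m+1) * Δ‖ = ‖A * (A ^ m * Δ)‖ := by rw [pow_succ', mul_assoc]
          _ ≤ ‖A‖ * ‖A ^ m * Δ‖ := norm_mul_le _ _
          _ ≤ R * (R ^ m * ‖Δ‖) := by
              apply mul_le_mul hA ih (norm_nonneg _) hR0
          _ = R ^ (m+1) * ‖Δ‖ := by ring
  set u : ℕ → ℝ := fun n => C * ((n : ℝ) * (R ^ (n-1) * ‖Δ‖)) / n ! with hudef
  have hbound : ∀ n : ℕ, ∀ t ∈ Set.Ioo (-2 : ℝ) 2, ‖g' n t‖ ≤ u n := by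
    intro n t ht
    have h1 : ‖((M t) ^ (n-1) * Δ).trace‖ ≤ C * (R ^ (n-1) * ‖Δ‖) := by
      calc ‖((M t) ^ (n-1) * Δ).trace‖ = ‖trCLM ((M t) ^ (n-1) * Δ)‖ := by rw [trCLM_apply]
        _ ≤ C * ‖(M t) ^ (n-1) * Δ‖ := T'.le_opNorm _
        _ ≤ C * (R ^ (n-1) * ‖Δ‖) := by
            apply mul_le_mul_of_nonneg_left (hpowmul _ (hMle t ht) _) (norm_nonneg T')
    have h2 : ‖g' n t‖ = (n ! : ℝ)⁻¹ * n * ‖((M t) ^ (n-1) * Δ).trace‖ := by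
      simp [hg'def, norm_smul]
    rw [h2]
    simp only [hudef]
    have hfac : (0:ℝ) < n ! := by exact_mod_cast Nat.factorial_pos n
    rw [div_eq_mul_inv]
    calc (n ! : ℝ)⁻¹ * n * ‖((M t) ^ (n-1) * Δ).trace‖
        ≤ (n ! : ℝ)⁻¹ * n * (C * (R ^ (n-1) * ‖Δ‖)) := by
          apply mul_le_mul_of_nonneg_left h1
          positivity
      _ = C * ((n : ℝ) * (R ^ (n-1) * ‖Δ‖)) * ((n ! : ℝ))⁻¹ := by ring
  have hu : Summable u := by
    apply Summable.of_nonneg_of_le (f := fun n => (C * ‖Δ‖) * ((2 * R) ^ n / n !))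
    · intro n; simp only [hudef]; positivity
    · intro n
      simp only [hudef]
      rw [div_le_iff₀ (by positivity : (0:ℝ) < (n ! : ℝ))]
      have hn2 : (n : ℝ) ≤ 2 ^ n := by
        exact_mod_cast (Nat.lt_two_pow_self (n := n)).le
      have hRp : R ^ (n-1) ≤ R ^ n := pow_le_pow_right₀ hR1 (Nat.sub_le n 1)
      have key : (n : ℝ) * (R ^ (n-1) * ‖Δ‖) ≤ (2 * R) ^ n * ‖Δ‖ := by
        rw [mul_pow]
        have h1 : (n : ℝ) * R ^ (n-1) ≤ 2 ^ n * R ^ n := by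
          apply mul_le_mul hn2 hRp (by positivity) (by positivity)
        nlinarith [norm_nonneg Δ, mul_le_mul_of_nonneg_right h1 (norm_nonneg Δ)]
      calc C * ((n : ℝ) * (R ^ (n-1) * ‖Δ‖)) ≤ C * ((2*R) ^ n * ‖Δ‖) := by
            apply mul_le_mul_of_nonneg_left key (norm_nonneg T')
        _ = C * ‖Δ‖ * ((2*R) ^ n / n !) * n ! := by field_simp
    · exact (Real.summable_pow_div_factorial (2 * R)).mul_left _
  have heq : (fun t : ℝ => (exp (M t)).trace) = fun t => ∑' n, g n t := by
    funext t
    rw [exp_eq_tsum ℂ]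
    rw [show ((∑' n : ℕ, ((n ! : ℂ)⁻¹) • (M t) ^ n).trace)
        = trCLM (∑' n : ℕ, ((n ! : ℂ)⁻¹) • (M t) ^ n) from rfl]
    rw [trCLM.map_tsum (expSeries_summable' (𝕂 := ℂ) (M t))]
    simp [hgdef]
  have hy0 : (0:ℝ) ∈ Set.Ioo (-2:ℝ) 2 := by norm_num
  have hg0 : Summable fun n => g n 0 := by
    have hs := expSeries_summable' (𝕂 := ℂ) (M 0)
    have := hs.map (trCLM : Matrix (Fin d) (Fin d) ℂ →L[ℂ] ℂ).toLinearMap.toAddMonoidHom trCLM.continuous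
    simpa [hgdef, Function.comp_def] using this
  have main : HasDerivAt (fun z => ∑' n, g n z) (∑' n, g' n y) y :=
    hasDerivAt_tsum_of_isPreconnected hu isOpen_Ioo (convex_Ioo _ _).isPreconnected
      (fun n t _ => hg n t) hbound hy0 hg0 hy
  have hsum' : Summable fun n => g' n y :=
    Summable.of_norm_bounded hu (fun n => hbound n y hy)
  have hshift : ∀ n : ℕ, g' (n+1) y = LDelta Δ (((n ! : ℂ)⁻¹) • (M y) ^ n) := by
    intro n
    have hcoef : (((n+1)! : ℂ))⁻¹ * ((n+1 : ℕ) : ℂ) = ((n ! : ℂ))⁻¹ := by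
      rw [Nat.factorial_succ]
      push_cast
      rw [mul_inv]
      have h1 : ((n:ℂ) + 1) ≠ 0 := by
        have := (Nat.cast_ne_zero (R := ℂ)).mpr (Nat.succ_ne_zero n)
        push_cast at this
        exact this
      have h2 : ((n ! : ℂ)) ≠ 0 := Nat.cast_ne_zero.mpr (Nat.factorial_ne_zero n)
      field_simp
    simp only [hg'def, Nat.add_sub_cancel, LDelta_apply, smul_mul_assoc, Matrix.trace_smul]
    rw [hcoef]
  have hkey : (∑' n, g' n y) = (exp (M y) * Δ).trace := by
    rw [hsum'.tsum_eq_zero_add]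
    have h0 : g' 0 y = 0 := by simp [hg'def]
    rw [h0, zero_add]
    calc (∑' n, g' (n+1) y) = ∑' n, LDelta Δ (((n ! : ℂ)⁻¹) • (M y) ^ n) := by
          exact tsum_congr hshift
      _ = LDelta Δ (∑' n, ((n ! : ℂ)⁻¹) • (M y) ^ n) :=
          ((LDelta Δ).map_tsum (expSeries_summable' (𝕂 := ℂ) (M y))).symm
      _ = (exp (M y) * Δ).trace := by rw [exp_eq_tsum ℂ]; rfl
  rw [show (fun t : ℝ => (exp (S + (t : ℂ) • Δ)).trace) = fun t => ∑' n, g n t from heq,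
    show (exp (S + (y : ℂ) • Δ) * Δ).trace = ∑' n, g' n y from hkey.symm]
  exact main

/-- if `S ≤ T` in the Löwner order (both Hermitian), then
`tr (exp S) ≤ tr (exp T)`. -/
theorem trace_exp_monotone {d : ℕ} (S T : Matrix (Fin d) (Fin d) ℂ)
    (hS : S.IsHermitian) (hT : T.IsHermitian) (hST : loewnerLE S T) :
    (mexp S).trace.re ≤ (mexp T).trace.re := by
  have hΔ : (T - S).PosSemidef := hST
  set Δ : Matrix (Fin d) (Fin d) ℂ := T - S with hΔdef
  have hΔh : Δ.IsHermitian := hΔ.1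
  set ph : ℝ → ℝ := fun t => ((exp (S + (t : ℂ) • Δ)).trace).re with hphdef
  have hphd : ∀ y ∈ Set.Ioo (-2:ℝ) 2,
      HasDerivAt ph (((exp (S + (y : ℂ) • Δ) * Δ).trace).re) y := by
    intro y hy
    have h := Complex.reCLM.hasFDerivAt.comp_hasDerivAt y (hasDerivAt_trace_exp S Δ hy)
    simpa [hphdef, Function.comp_def] using h
  have hmono : MonotoneOn ph (Set.Icc (0:ℝ) 1) := by
    apply monotoneOn_of_deriv_nonneg (convex_Icc 0 1)
    · intro x hx
      have hx' : x ∈ Set.Ioo (-2:ℝ) 2 := ⟨by linarith [hx.1], by linarith [hx.2]⟩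
      exact ((hphd x hx').continuousAt).continuousWithinAt
    · intro x hx
      rw [interior_Icc] at hx
      have hx' : x ∈ Set.Ioo (-2:ℝ) 2 := ⟨by linarith [hx.1], by linarith [hx.2]⟩
      exact ((hphd x hx').differentiableAt).differentiableWithinAt
    · intro x hx
      rw [interior_Icc] at hx
      have hx' : x ∈ Set.Ioo (-2:ℝ) 2 := ⟨by linarith [hx.1], by linarith [hx.2]⟩
      rw [(hphd x hx').deriv]
      exact psd_trace_mul_re_nonneg (exp_posSemidef _ (herm_line hS hΔh x)) hΔ
  have h01 := hmono (Set.left_mem_Icc.mpr zero_le_one) (Set.right_mem_Icc.mpr zero_le_one)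
    zero_le_one
  have e0 : S + ((0:ℝ) : ℂ) • Δ = S := by simp
  have e1 : S + Δ = T := by simp [hΔdef]
  rw [mexp_eq_exp S hS, mexp_eq_exp T hT]
  simpa [hphdef, e0, e1] using h01
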